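/- An orientation D of an undirected graph G=(V,E) has a decreasingly minimal in-degree vector (among all orientations of G) if and only if there is no directed path in D from a node s to a node t with ρ_D(t) ≥ ρ_D(s) + 2. -/

import Mathlib

open Finset

/-- Head of edge `e` under orientation `o` (an orientation picks, for each edge,
one of its two end-nodes as head). -/
def ohead {V E : Type*} (ends : E → V × V) (o : E → Bool) (e : E) : V :=
  if o e then (ends e).1 else (ends e).2

/-- Tail of edge `e` under orientation `o`. -/
def otail {V E : Type*} (ends : E → V × V) (o : E → Bool) (e : E) : V :=
  if o e then (ends e).2 else (ends e).1

/-- In-degree of node `v` in the orientation `o` of the graph. -/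
def indeg {V E : Type*} [Fintype E] [DecidableEq V] (ends : E → V × V) (o : E → Bool)
    (v : V) : ℕ :=
  (Finset.univ.filter fun e => ohead ends o e = v).card

/-- `e_G(X)`: number of edges with at least one end-node in `X`. -/
def eG {V E : Type*} [Fintype E] [DecidableEq V] (ends : E → V × V) (X : Finset V) : ℕ :=
  (Finset.univ.filter fun e => (ends e).1 ∈ X ∨ (ends e).2 ∈ X).card

/-- `i_G(X)`: number of edges induced by `X` (both end-nodes in `X`). -/
def iG {V E : Type*} [Fintype E] [DecidableEq V] (ends : E → V × V) (X : Finset V) : ℕ :=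
  (Finset.univ.filter fun e => (ends e).1 ∈ X ∧ (ends e).2 ∈ X).card

/-- `ρ_D(X)`: number of arcs entering `X` (head in `X`, tail outside). -/
def inCut {V E : Type*} [Fintype E] [DecidableEq V] (ends : E → V × V) (o : E → Bool)
    (X : Finset V) : ℕ :=
  (Finset.univ.filter fun e => ohead ends o e ∈ X ∧ otail ends o e ∉ X).card

/-- `d_G(X)`: number of edges with exactly one end-node in `X`. -/
def dG {V E : Type*} [Fintype E] [DecidableEq V] (ends : E → V × V) (X : Finset V) : ℕ :=
  (Finset.univ.filter fun e =>
    ((ends e).1 ∈ X ∧ (ends e).2 ∉ X) ∨ ((ends e).2 ∈ X ∧ (ends e).1 ∉ X)).card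

/-- `Reach ends o s t`: there is a directed path from `s` to `t` in the orientation `o`. -/
def Reach {V E : Type*} (ends : E → V × V) (o : E → Bool) : V → V → Prop :=
  Relation.ReflTransGen fun u v => ∃ e, otail ends o e = u ∧ ohead ends o e = v

/-- `IsDipath ends o s t P`: the list of edges `P` forms a directed walk from `s` to `t`. -/
def IsDipath {V E : Type*} (ends : E → V × V) (o : E → Bool) : V → V → List E → Prop
  | s, t, [] => s = t
  | s, t, e :: P => otail ends o e = s ∧ IsDipath ends o (ohead ends o e) t P

/-- The components of `m` sorted in decreasing order. -/
def decSeq {V : Type*} [Fintype V] (m : V → ℕ) : List ℕ :=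
  (Multiset.sort (Finset.univ.val.map m) (· ≤ ·)).reverse

/-- The components of `m` sorted in increasing order. -/
def incSeq {V : Type*} [Fintype V] (m : V → ℕ) : List ℕ :=
  Multiset.sort (Finset.univ.val.map m) (· ≤ ·)


/- ===================== Auxiliary machinery ===================== -/

section LexCount

/-- count of entries `≥ c` in a list -/
def cntge (l : List ℕ) (c : ℕ) : ℕ := l.countP (fun x => c ≤ x)

lemma cntge_cons (a : ℕ) (l : List ℕ) (c : ℕ) :
    cntge (a :: l) c = cntge l c + if c ≤ a then 1 else 0 := by
  simp [cntge, List.countP_cons]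

lemma cntge_eq_zero {l : List ℕ} {c : ℕ} (h : ∀ x ∈ l, x < c) : cntge l c = 0 := by
  rw [cntge, List.countP_eq_zero]
  intro a ha
  simpa using Nat.not_le.mpr (h a ha)

lemma mem_le_head {a : ℕ} {l : List ℕ} (hs : (a :: l).Pairwise (· ≥ ·)) {x : ℕ}
    (hx : x ∈ a :: l) : x ≤ a := by
  rcases List.mem_cons.mp hx with h | h
  · exact h.le
  · exact (List.pairwise_cons.mp hs).1 x h

lemma lex_iff_cnt : ∀ {l' l : List ℕ}, l'.length = l.length →
    l'.Pairwise (· ≥ ·) → l.Pairwise (· ≥ ·) →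
    (List.Lex (· < ·) l' l ↔
      ∃ c, cntge l' c < cntge l c ∧ ∀ d, c < d → cntge l' d = cntge l d) := by
  intro l' l
  induction l' generalizing l with
  | nil =>
    intro hlen _ _
    cases l with
    | nil =>
      constructor
      · intro h; cases h
      · rintro ⟨c, hc, -⟩; simp [cntge] at hc
    | cons a r => simp at hlen
  | cons a' r' ih =>
    intro hlen hs' hs
    cases l with
    | nil => simp at hlen
    | cons a r =>
      simp only [List.length_cons, Nat.add_right_cancel_iff] at hlen
      rcases lt_trichotomy a' a with hlt | heq | hgt
      · constructor
        · intro _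
          refine ⟨a, ?_, ?_⟩
          · rw [cntge_eq_zero (fun x hx => lt_of_le_of_lt (mem_le_head hs' hx) hlt),
              cntge_cons]
            simp
          · intro d hd
            rw [cntge_eq_zero (fun x hx => lt_of_le_of_lt (mem_le_head hs' hx) (hlt.trans hd)),
              cntge_eq_zero (fun x hx => lt_of_le_of_lt (mem_le_head hs hx) hd)]
        · intro _; exact List.Lex.rel hlt
      · subst heq
        have hstep : (List.Lex (· < ·) r' r ↔
            ∃ c, cntge r' c < cntge r c ∧ ∀ d, c < d → cntge r' d = cntge r d) :=
          ih hlen hs'.of_cons hs.of_cons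
        constructor
        · intro h
          have h' : List.Lex (· < ·) r' r := by
            cases h with
            | cons h => exact h
            | rel h => exact absurd h (lt_irrefl _)
          rcases hstep.mp h' with ⟨c, hc, hd⟩
          refine ⟨c, ?_, ?_⟩
          · rw [cntge_cons, cntge_cons]; omega
          · intro d hdgt; rw [cntge_cons, cntge_cons, hd d hdgt]
        · rintro ⟨c, hc, hd⟩
          apply List.Lex.cons
          apply hstep.mpr
          refine ⟨c, ?_, ?_⟩
          · rw [cntge_cons, cntge_cons] at hc; omega
          · intro d hdgt
            have := hd d hdgt
            rw [cntge_cons, cntge_cons] at this; omega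
      · constructor
        · intro h
          cases h with
          | rel h => exact absurd h (lt_asymm hgt)
          | cons h => exact absurd rfl (ne_of_gt hgt)
        · rintro ⟨c, hc, hd⟩
          exfalso
          have h0 : cntge (a :: r) a' = 0 :=
            cntge_eq_zero (fun x hx => lt_of_le_of_lt (mem_le_head hs hx) hgt)
          have h1 : 1 ≤ cntge (a' :: r') a' := by rw [cntge_cons]; simp
          rcases lt_trichotomy c a' with h | h | h
          · have := hd a' h; omega
          · subst h; omega
          · have : cntge (a :: r) c = 0 :=
              cntge_eq_zero (fun x hx => lt_of_le_of_lt (mem_le_head hs hx) (hgt.trans h))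
            omega

end LexCount

section DecSeqBridge

/-- number of components of `m` that are `≥ c` -/
def Ncnt {V : Type*} [Fintype V] [DecidableEq V] (m : V → ℕ) (c : ℕ) : ℕ :=
  (Finset.univ.filter fun v => c ≤ m v).card

variable {V : Type*} [Fintype V] [DecidableEq V]

lemma decSeq_sorted (m : V → ℕ) : (decSeq m).Pairwise (· ≥ ·) := by
  rw [decSeq, List.pairwise_reverse]
  exact Multiset.pairwise_sort (α := ℕ) _ _

lemma decSeq_length (m : V → ℕ) : (decSeq m).length = Fintype.card V := by
  rw [decSeq, List.length_reverse, Multiset.length_sort]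
  simp

lemma cntge_decSeq (m : V → ℕ) (c : ℕ) : cntge (decSeq m) c = Ncnt m c := by
  rw [decSeq, cntge]
  rw [List.countP_eq_length_filter, List.filter_reverse, List.length_reverse,
    ← List.countP_eq_length_filter]
  have h1 : (Multiset.sort (Finset.univ.val.map m) (· ≤ ·)).countP (fun x => c ≤ x)
      = Multiset.countP (fun x => c ≤ x) (Finset.univ.val.map m) := by
    rw [← Multiset.coe_countP]
    congr 1
    exact Multiset.sort_eq _ _
  rw [h1, Multiset.countP_map]
  rw [Ncnt, Finset.card, Finset.filter_val]

lemma decSeq_lt_iff (m m' : V → ℕ) :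
    decSeq m' < decSeq m ↔
      ∃ c, Ncnt m' c < Ncnt m c ∧ ∀ d, c < d → Ncnt m' d = Ncnt m d := by
  have h := lex_iff_cnt (l' := decSeq m') (l := decSeq m)
    (by rw [decSeq_length, decSeq_length]) (decSeq_sorted m') (decSeq_sorted m)
  simp only [cntge_decSeq] at h
  exact h

end DecSeqBridge

section GraphCount

variable {V E : Type*} [Fintype V] [Fintype E] [DecidableEq V] (ends : E → V × V)

omit [Fintype V] in
lemma sum_indeg (o : E → Bool) (X : Finset V) :
    ∑ v ∈ X, indeg ends o v = (Finset.univ.filter fun e => ohead ends o e ∈ X).card := by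
  rw [Finset.card_eq_sum_card_fiberwise (f := ohead ends o) (t := X)
    (s := Finset.univ.filter fun e => ohead ends o e ∈ X)
    (fun e he => (Finset.mem_filter.mp he).2)]
  apply Finset.sum_congr rfl
  intro v hv
  rw [indeg]
  congr 1
  ext e
  simp only [Finset.mem_filter, Finset.mem_univ, true_and]
  constructor
  · intro h; exact ⟨h ▸ hv, h⟩
  · exact fun h => h.2

omit [Fintype V] in
lemma sum_indeg_eq (o : E → Bool) (X : Finset V) :
    ∑ v ∈ X, indeg ends o v = iG ends X + inCut ends o X := by
  classical
  rw [sum_indeg]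
  have hsplit := Finset.card_filter_add_card_filter_not
    (s := Finset.univ.filter fun e => ohead ends o e ∈ X)
    (p := fun e => otail ends o e ∈ X)
  rw [Finset.filter_filter, Finset.filter_filter] at hsplit
  rw [← hsplit]
  congr 1
  rw [iG]
  congr 1
  apply Finset.filter_congr
  intro e _
  unfold ohead otail
  by_cases h : o e <;> simp [h, and_comm]

omit [Fintype V] in
lemma iG_le_sum_indeg (o : E → Bool) (X : Finset V) :
    iG ends X ≤ ∑ v ∈ X, indeg ends o v := by
  rw [sum_indeg, iG]
  apply Finset.card_le_card
  intro e he
  simp only [Finset.mem_filter, Finset.mem_univ, true_and] at he ⊢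
  unfold ohead
  by_cases h : o e <;> simp [h, he.1, he.2]

omit [Fintype V] in
lemma indeg_le_cardE (o : E → Bool) (v : V) : indeg ends o v ≤ Fintype.card E :=
  (Finset.card_le_card (Finset.filter_subset _ _)).trans (le_of_eq Finset.card_univ)

lemma sum_eq_sum_cnt (f : V → ℕ) (X : Finset V) (B : ℕ) (hB : ∀ v, f v ≤ B) :
    ∑ v ∈ X, f v = ∑ d ∈ Finset.range B, (X.filter fun v => d + 1 ≤ f v).card :=
  calc ∑ v ∈ X, f v
      = ∑ v ∈ X, ((Finset.range B).filter fun d => d + 1 ≤ f v).card := by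
        apply Finset.sum_congr rfl
        intro v _
        have h : (Finset.range B).filter (fun d => d + 1 ≤ f v) = Finset.range (f v) := by
          ext d
          simp only [Finset.mem_filter, Finset.mem_range]
          have := hB v
          omega
        rw [h, Finset.card_range]
    _ = ∑ v ∈ X, ∑ d ∈ Finset.range B, if d + 1 ≤ f v then 1 else 0 :=
        Finset.sum_congr rfl (fun v _ => Finset.card_filter _ _)
    _ = ∑ d ∈ Finset.range B, ∑ v ∈ X, if d + 1 ≤ f v then 1 else 0 := Finset.sum_comm
    _ = ∑ d ∈ Finset.range B, (X.filter fun v => d + 1 ≤ f v).card :=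
        Finset.sum_congr rfl (fun d _ => (Finset.card_filter _ _).symm)

end GraphCount

section Dipath

variable {V E : Type*} (ends : E → V × V) (o : E → Bool)

lemma reach_exists_dipath {s t : V} (h : Reach ends o s t) :
    ∃ P, IsDipath ends o s t P := by
  induction h using Relation.ReflTransGen.head_induction_on with
  | refl => exact ⟨[], rfl⟩
  | head step _ ih =>
    obtain ⟨e, he1, he2⟩ := step
    obtain ⟨P, hP⟩ := ih
    refine ⟨e :: P, he1, ?_⟩
    rw [he2]
    exact hP

lemma isDipath_suffix : ∀ (Q : List E) {s t : V} (P : List E),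
    IsDipath ends o s t (Q ++ P) → ∃ u, IsDipath ends o u t P := by
  intro Q
  induction Q with
  | nil => exact fun {s t} P h => ⟨s, h⟩
  | cons e Q ih =>
    intro s t P h
    exact ih P h.2

lemma exists_simple_dipath : ∀ (n : ℕ) (P : List E) (s t : V), P.length ≤ n →
    IsDipath ends o s t P →
    ∃ Q, IsDipath ends o s t Q ∧ (s :: Q.map (ohead ends o)).Nodup ∧
      ∀ x ∈ Q.map (ohead ends o), x ∈ P.map (ohead ends o) := by
  intro n
  induction n with
  | zero =>
    intro P s t hlen hP
    have : P = [] := List.length_eq_zero_iff.mp (Nat.le_zero.mp hlen)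
    subst this
    exact ⟨[], hP, by simp, by simp⟩
  | succ n ih =>
    intro P s t hlen hP
    by_cases hs : s ∈ P.map (ohead ends o)
    · obtain ⟨e, heP, he⟩ := List.mem_map.mp hs
      obtain ⟨P₁, P₂, rfl⟩ := List.append_of_mem heP
      obtain ⟨u, hu⟩ := isDipath_suffix ends o P₁ (e :: P₂) hP
      have h2 : IsDipath ends o s t P₂ := by rw [← he]; exact hu.2
      have hlen2 : P₂.length ≤ n := by
        rw [List.length_append, List.length_cons] at hlen; omega
      obtain ⟨Q, hQ1, hQ2, hQ3⟩ := ih P₂ s t hlen2 h2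
      refine ⟨Q, hQ1, hQ2, fun x hx => ?_⟩
      have := hQ3 x hx
      rw [List.map_append, List.mem_append, List.map_cons, List.mem_cons]
      exact Or.inr (Or.inr this)
    · cases P with
      | nil => exact ⟨[], hP, by simp, by simp⟩
      | cons e P' =>
        obtain ⟨hte, hP'⟩ := hP
        have hlen' : P'.length ≤ n := by
          rw [List.length_cons] at hlen; omega
        obtain ⟨Q', h1, h2, h3⟩ := ih P' (ohead ends o e) t hlen' hP'
        refine ⟨e :: Q', ⟨hte, h1⟩, ?_, ?_⟩
        · simp only [List.map_cons]
          rw [List.nodup_cons]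
          refine ⟨?_, h2⟩
          intro hmem
          rcases List.mem_cons.mp hmem with h | h
          · exact hs (by rw [List.map_cons, h]; exact List.mem_cons_self)
          · exact hs (by rw [List.map_cons]; exact List.mem_cons_of_mem _ (h3 s h))
        · intro x hx
          rw [List.map_cons, List.mem_cons] at hx ⊢
          rcases hx with h | h
          · exact Or.inl h
          · exact Or.inr (h3 x h)

lemma map_otail_eq : ∀ (P : List E) (s t : V), IsDipath ends o s t P →
    P.map (otail ends o) = (s :: P.map (ohead ends o)).dropLast := by
  intro P
  induction P with
  | nil => simp
  | cons e P' ih =>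
    intro s t h
    obtain ⟨h1, h2⟩ := h
    simp only [List.map_cons, List.dropLast_cons₂]
    rw [ih _ t h2, h1]

lemma dipath_getLast : ∀ (P : List E) (s t : V), IsDipath ends o s t P →
    (s :: P.map (ohead ends o)).getLast (List.cons_ne_nil _ _) = t := by
  intro P
  induction P with
  | nil => intro s t h; exact h
  | cons e P' ih =>
    intro s t h
    rw [List.map_cons, List.getLast_cons (List.cons_ne_nil _ _)]
    exact ih (ohead ends o e) t h.2

end Dipath

section FlipCount

variable {V E : Type*} [DecidableEq V]

lemma countP_map_nodup (f : E → V) :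
    ∀ (P : List E), (P.map f).Nodup → ∀ v : V,
    P.countP (fun e => decide (f e = v)) = if v ∈ P.map f then 1 else 0 := by
  intro P
  induction P with
  | nil => simp
  | cons e P' ih =>
    intro hnd v
    rw [List.map_cons, List.nodup_cons] at hnd
    rw [List.countP_cons, ih hnd.2 v]
    by_cases h : f e = v
    · subst h
      rw [if_neg hnd.1]
      simp
    · have hiff : (v ∈ f e :: List.map f P') ↔ (v ∈ List.map f P') := by
        rw [List.mem_cons]
        exact ⟨fun h3 => h3.elim (fun h4 => absurd h4.symm h) id, Or.inr⟩
      simp [h, hiff]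

lemma card_filter_mem [DecidableEq E] [Fintype E]
    (f : E → V) (P : List E) (hnd : (P.map f).Nodup) (v : V) :
    (Finset.univ.filter fun e => e ∈ P ∧ f e = v).card = if v ∈ P.map f then 1 else 0 := by
  have hPnd : P.Nodup := List.Nodup.of_map f hnd
  have h1 : (Finset.univ.filter fun e => e ∈ P ∧ f e = v)
      = (P.filter (fun e => decide (f e = v))).toFinset := by
    ext e
    simp [List.mem_filter]
  rw [h1, List.toFinset_card_of_nodup (hPnd.filter _), ← List.countP_eq_length_filter,
    countP_map_nodup f P hnd v]

lemma exists_flip [Fintype E] (ends : E → V × V) (o : E → Bool) {s t : V} (hst : s ≠ t)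
    (hreach : Reach ends o s t) :
    ∃ o' : E → Bool, indeg ends o' s = indeg ends o s + 1 ∧
      indeg ends o t = indeg ends o' t + 1 ∧
      ∀ v, v ≠ s → v ≠ t → indeg ends o' v = indeg ends o v := by
  classical
  obtain ⟨P₀, hP₀⟩ := reach_exists_dipath ends o hreach
  obtain ⟨P, hP, hnd, -⟩ := exists_simple_dipath ends o P₀.length P₀ s t le_rfl hP₀
  set H := P.map (ohead ends o) with hH
  set T := P.map (otail ends o) with hT
  have htails : T = (s :: H).dropLast := map_otail_eq ends o P s t hP
  have hPne : P ≠ [] := by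
    intro h
    subst h
    exact hst hP
  have hHne : H ≠ [] := by
    rw [hH, ne_eq, List.map_eq_nil_iff]
    exact hPne
  have hheadsNd : H.Nodup := hnd.of_cons
  have htailsNd : T.Nodup := by
    rw [htails]
    exact hnd.sublist (List.dropLast_sublist _)
  have hlast : (s :: H).getLast (List.cons_ne_nil _ _) = t := dipath_getLast ends o P s t hP
  have hlast' : H.getLast hHne = t := by
    rw [← hlast, List.getLast_cons hHne]
  have hsH : s ∉ H := (List.nodup_cons.mp hnd).1
  have hsT : s ∈ T := by
    cases P with
    | nil => exact absurd rfl hPne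
    | cons e P' =>
      rw [hT, List.map_cons, hP.1]
      exact List.mem_cons_self
  have htH : t ∈ H := by
    rw [← hlast']
    exact List.getLast_mem hHne
  have hsplit := List.dropLast_append_getLast (l := s :: H) (List.cons_ne_nil _ _)
  have hnd2 : ((s :: H).dropLast).Disjoint [(s :: H).getLast (List.cons_ne_nil _ _)] := by
    have : ((s :: H).dropLast ++ [(s :: H).getLast (List.cons_ne_nil _ _)]).Nodup := by
      rw [hsplit]
      exact hnd
    exact (List.nodup_append'.mp this).2.2
  have htT : t ∉ T := by
    rw [htails]
    intro hmem
    exact hnd2 hmem (by rw [hlast]; exact List.mem_singleton_self t)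
  have hmid : ∀ v, v ≠ s → v ≠ t → ((v ∈ H) ↔ (v ∈ T)) := by
    intro v hvs hvt
    rw [htails]
    constructor
    · intro hv
      have : v ∈ (s :: H).dropLast ++ [(s :: H).getLast (List.cons_ne_nil _ _)] := by
        rw [hsplit]
        exact List.mem_cons_of_mem _ hv
      rcases List.mem_append.mp this with h | h
      · exact h
      · exact absurd (by rwa [hlast, List.mem_singleton] at h) hvt
    · intro hv
      have : v ∈ s :: H := (List.dropLast_sublist _).subset hv
      rcases List.mem_cons.mp this with h | h
      · exact absurd h hvs
      · exact h
  refine ⟨fun e => if e ∈ P then !(o e) else o e, ?_, ?_, ?_⟩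
  all_goals {
    have flip_head : ∀ e ∈ P, ohead ends (fun e => if e ∈ P then !(o e) else o e) e
        = otail ends o e := by
      intro e he
      simp only [ohead, otail, if_pos he]
      cases h : o e <;> simp [h]
    have same_head : ∀ e, e ∉ P → ohead ends (fun e => if e ∈ P then !(o e) else o e) e
        = ohead ends o e := by
      intro e he
      simp only [ohead, if_neg he]
    have key : ∀ v, indeg ends (fun e => if e ∈ P then !(o e) else o e) v
        + (if v ∈ H then 1 else 0)
        = indeg ends o v + (if v ∈ T then 1 else 0) := by
      intro v
      have e1 : (Finset.univ.filter fun e =>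
          ohead ends (fun e => if e ∈ P then !(o e) else o e) e = v)
          = (Finset.univ.filter fun e => (e ∈ P ∧ otail ends o e = v)
            ∨ (¬ e ∈ P ∧ ohead ends o e = v)) := by
        ext e
        simp only [Finset.mem_filter, Finset.mem_univ, true_and]
        by_cases he : e ∈ P
        · rw [flip_head e he]; tauto
        · rw [same_head e he]; tauto
      have e2 : (Finset.univ.filter fun e => ohead ends o e = v)
          = (Finset.univ.filter fun e => (e ∈ P ∧ ohead ends o e = v)
            ∨ (¬ e ∈ P ∧ ohead ends o e = v)) := by
        ext e
        simp only [Finset.mem_filter, Finset.mem_univ, true_and]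
        tauto
      have d1 : ∀ (q r : E → Prop) [DecidablePred q] [DecidablePred r],
          (Finset.univ.filter fun e => (e ∈ P ∧ q e) ∨ (¬ e ∈ P ∧ r e)).card
          = (Finset.univ.filter fun e => e ∈ P ∧ q e).card
            + (Finset.univ.filter fun e => ¬ e ∈ P ∧ r e).card := by
        intro q r _ _
        rw [Finset.filter_or]
        apply Finset.card_union_of_disjoint
        rw [Finset.disjoint_left]
        intro a ha ha'
        exact (Finset.mem_filter.mp ha').2.1 (Finset.mem_filter.mp ha).2.1
      rw [indeg, indeg, e1, e2, d1, d1,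
        card_filter_mem (otail ends o) P htailsNd v,
        card_filter_mem (ohead ends o) P hheadsNd v]
      ring
    first
    | · have := key s
        rw [if_neg hsH, if_pos hsT] at this
        omega
    | · have := key t
        rw [if_pos htH, if_neg htT] at this
        omega
    | · intro v hvs hvt
        have := key v
        by_cases hv : v ∈ H
        · rw [if_pos hv, if_pos ((hmid v hvs hvt).mp hv)] at this
          omega
        · rw [if_neg hv, if_neg (fun hc => hv ((hmid v hvs hvt).mpr hc))] at this
          omega
  }

end FlipCount

/-- An orientation `D` of `G` has decreasingly minimal in-degree vector
(among all orientations of `G`) iff there is no directed path in `D` from a node `s` to a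
node `t` with `ρ_D(t) ≥ ρ_D(s) + 2`. -/
theorem decmin_orientation_iff_no_improving_dipath {V E : Type*}
    [Fintype V] [Fintype E] [DecidableEq V]
    (ends : E → V × V) (hloop : ∀ e, (ends e).1 ≠ (ends e).2) (o : E → Bool) :
    (∀ o' : E → Bool, decSeq (indeg ends o) ≤ decSeq (indeg ends o')) ↔
      ¬ ∃ s t : V, Reach ends o s t ∧ indeg ends o s + 2 ≤ indeg ends o t := by
  classical
  constructor
  · rintro hmin ⟨s, t, hreach, himp⟩
    have hst : s ≠ t := by
      intro h
      rw [h] at himp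
      omega
    obtain ⟨o', h1, h2, h3⟩ := exists_flip ends o hst hreach
    have hlex : decSeq (indeg ends o') < decSeq (indeg ends o) := by
      apply (decSeq_lt_iff _ _).mpr
      refine ⟨indeg ends o t, ?_, ?_⟩
      · apply Finset.card_lt_card
        rw [Finset.ssubset_iff_of_subset]
        · refine ⟨t, ?_, ?_⟩
          · exact Finset.mem_filter.mpr ⟨Finset.mem_univ _, le_rfl⟩
          · intro hc
            have := (Finset.mem_filter.mp hc).2
            omega
        · intro v hv
          have hv' := (Finset.mem_filter.mp hv).2
          refine Finset.mem_filter.mpr ⟨Finset.mem_univ _, ?_⟩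
          by_cases hvs : v = s
          · subst hvs
            omega
          · by_cases hvt : v = t
            · subst hvt
              omega
            · rw [h3 v hvs hvt] at hv'
              exact hv'
      · intro d hd
        unfold Ncnt
        congr 1
        apply Finset.filter_congr
        intro v _
        by_cases hvs : v = s
        · subst hvs
          constructor <;> (intro h; omega)
        · by_cases hvt : v = t
          · subst hvt
            constructor <;> (intro h; omega)
          · rw [h3 v hvs hvt]
    exact absurd (hmin o') (not_le.mpr hlex)
  · intro hno o'
    by_contra hcon
    obtain ⟨c, hc, hd⟩ := (decSeq_lt_iff (indeg ends o) (indeg ends o')).mp (not_le.mp hcon)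
    set m := indeg ends o with hm
    set m' := indeg ends o' with hm'
    set S := Finset.univ.filter (fun v : V => ∃ t', c ≤ m t' ∧ Reach ends o v t') with hS
    have hTS : ∀ v, c ≤ m v → v ∈ S := fun v hv =>
      Finset.mem_filter.mpr ⟨Finset.mem_univ _, v, hv, Relation.ReflTransGen.refl⟩
    have hSlow : ∀ v ∈ S, c ≤ m v + 1 := by
      intro v hv
      obtain ⟨-, t', ht', hr⟩ := Finset.mem_filter.mp hv
      by_contra h
      exact hno ⟨v, t', hr, by omega⟩
    have hclosed : inCut ends o S = 0 := by
      rw [inCut, Finset.card_eq_zero, Finset.filter_eq_empty_iff]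
      rintro e - ⟨hin, hout⟩
      obtain ⟨-, t', ht', hr⟩ := Finset.mem_filter.mp hin
      exact hout (Finset.mem_filter.mpr ⟨Finset.mem_univ _, t', ht',
        Relation.ReflTransGen.head ⟨e, rfl, rfl⟩ hr⟩)
    have hsum_eq : ∑ v ∈ S, m v = iG ends S := by
      rw [hm, sum_indeg_eq, hclosed, add_zero]
    have hsum_ge : iG ends S ≤ ∑ v ∈ S, m' v := iG_le_sum_indeg ends o' S
    have hfilter_eq : ∀ d, c ≤ d → (S.filter fun v => d ≤ m v)
        = Finset.univ.filter fun v => d ≤ m v := by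
      intro d hdge
      ext v
      simp only [Finset.mem_filter, Finset.mem_univ, true_and]
      constructor
      · exact fun h => h.2
      · intro h
        exact ⟨hTS v (le_trans hdge h), h⟩
    have hcB : ∃ v, c ≤ m v := by
      have : 0 < Ncnt m c := by omega
      obtain ⟨v, hv⟩ := Finset.card_pos.mp this
      exact ⟨v, (Finset.mem_filter.mp hv).2⟩
    have hc1 : 1 ≤ c := by
      by_contra h
      have hc0 : c = 0 := by omega
      subst hc0
      have h1 : Ncnt m 0 = Fintype.card V := by
        unfold Ncnt
        rw [Finset.filter_true_of_mem (fun v _ => Nat.zero_le _), Finset.card_univ]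
      have h2 : Ncnt m' 0 = Fintype.card V := by
        unfold Ncnt
        rw [Finset.filter_true_of_mem (fun v _ => Nat.zero_le _), Finset.card_univ]
      omega
    have hstrict : ∑ v ∈ S, m' v < ∑ v ∈ S, m v := by
      rw [sum_eq_sum_cnt m S (Fintype.card E) (fun v => indeg_le_cardE ends o v),
        sum_eq_sum_cnt m' S (Fintype.card E) (fun v => indeg_le_cardE ends o' v)]
      have hterm : ∀ d ∈ Finset.range (Fintype.card E),
          (S.filter fun v => d + 1 ≤ m' v).card ≤ (S.filter fun v => d + 1 ≤ m v).card := by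
        intro d _
        rcases lt_or_ge d (c - 1) with hcase | hcase
        · -- d + 1 < c : right side is all of S
          have : (S.filter fun v => d + 1 ≤ m v) = S := by
            apply Finset.filter_true_of_mem
            intro v hv
            have := hSlow v hv
            omega
          rw [this]
          exact Finset.card_filter_le _ _
        · -- c ≤ d + 1
          have hcd : c ≤ d + 1 := by omega
          have hle1 : (S.filter fun v => d + 1 ≤ m' v).card ≤ Ncnt m' (d + 1) :=
            Finset.card_le_card (Finset.filter_subset_filter _ (Finset.subset_univ S))
          have hle2 : Ncnt m' (d + 1) ≤ Ncnt m (d + 1) := by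
            rcases eq_or_lt_of_le hcd with h | h
            · rw [← h]
              omega
            · rw [hd (d + 1) h]
          rw [hfilter_eq (d + 1) hcd]
          exact le_trans hle1 hle2
      apply Finset.sum_lt_sum hterm
      refine ⟨c - 1, ?_, ?_⟩
      · rw [Finset.mem_range]
        obtain ⟨v, hv⟩ := hcB
        have := indeg_le_cardE ends o v
        rw [← hm] at this
        omega
      · have hceq : c - 1 + 1 = c := by omega
        rw [hceq, hfilter_eq c le_rfl]
        calc (S.filter fun v => c ≤ m' v).card
            ≤ Ncnt m' c := Finset.card_le_card (Finset.filter_subset_filter _ (Finset.subset_univ S))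
          _ < Ncnt m c := hc
          _ = (Finset.univ.filter fun v => c ≤ m v).card := rfl
    omega
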